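/- Let β > 1, δ ∈ (0, π/4), σ > 0 and suppose σ‖v‖ > β − 1 with v = (β sin 2δ, 1 + β cos 2δ). Then the equation ⟨v, (cos(φ−δ), sin(φ−δ))⟩ = −(β−1)/σ has exactly two solutions φ ∈ [0, 2π), and exactly one of them satisfies ⟨w, (cos(φ−δ), sin(φ−δ))⟩ > 0, where w = (1 + β cos 2δ, −β sin 2δ) is v rotated clockwise by 90°. That unique solution is φ^C = δ − π + arctan((1 + β cos 2δ)/(β sin 2δ)) + arccos((β−1)/(σ‖v‖)). -/

import Mathlib

open Real

private lemma sin_per (x : ℝ) (k : ℤ) : Real.sin (x + 2 * Real.pi * k) = Real.sin x := by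
  rw [show x + 2 * Real.pi * k = x + (k : ℝ) * (2 * Real.pi) by ring]
  exact Real.sin_add_int_mul_two_pi x k

set_option maxHeartbeats 1000000 in
theorem unique_stable_sync_phase (β δ σ : ℝ) (hβ : 1 < β) (hδ : δ ∈ Set.Ioo 0 (Real.pi / 4))
    (hσ : 0 < σ)
    (hexist : β - 1 < σ * Real.sqrt (1 + β ^ 2 + 2 * β * Real.cos (2 * δ))) :
    (∃ a b : ℝ, a ≠ b ∧
      {φ : ℝ | φ ∈ Set.Ico 0 (2 * Real.pi) ∧
        β * Real.sin (2 * δ) * Real.cos (φ - δ) + (1 + β * Real.cos (2 * δ)) * Real.sin (φ - δ)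
          = -((β - 1) / σ)} = {a, b})
    ∧ (∃! φ : ℝ, φ ∈ Set.Ico 0 (2 * Real.pi) ∧
        β * Real.sin (2 * δ) * Real.cos (φ - δ) + (1 + β * Real.cos (2 * δ)) * Real.sin (φ - δ)
          = -((β - 1) / σ)
        ∧ 0 < (1 + β * Real.cos (2 * δ)) * Real.cos (φ - δ)
              + (-(β * Real.sin (2 * δ))) * Real.sin (φ - δ))
    ∧ (∀ φ : ℝ, (φ ∈ Set.Ico 0 (2 * Real.pi) ∧
        β * Real.sin (2 * δ) * Real.cos (φ - δ) + (1 + β * Real.cos (2 * δ)) * Real.sin (φ - δ)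
          = -((β - 1) / σ)
        ∧ 0 < (1 + β * Real.cos (2 * δ)) * Real.cos (φ - δ)
              + (-(β * Real.sin (2 * δ))) * Real.sin (φ - δ)) →
        ∃ m : ℤ, φ = δ - Real.pi + Real.arctan ((1 + β * Real.cos (2 * δ)) / (β * Real.sin (2 * δ)))
          + Real.arccos ((β - 1) / (σ * Real.sqrt (1 + β ^ 2 + 2 * β * Real.cos (2 * δ))))
          + 2 * Real.pi * m) := by
  obtain ⟨hδ0, hδπ⟩ := hδ
  have hpi := Real.pi_pos
  set A := β * Real.sin (2 * δ) with hA_def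
  set B := 1 + β * Real.cos (2 * δ) with hB_def
  set S := 1 + β ^ 2 + 2 * β * Real.cos (2 * δ) with hS_def
  set R := Real.sqrt S with hR_def
  set c := (β - 1) / σ with hc_def
  have hβ0 : (0:ℝ) < β := by linarith
  have hsin2 : 0 < Real.sin (2 * δ) :=
    Real.sin_pos_of_pos_of_lt_pi (by linarith) (by linarith)
  have hcos2 : 0 < Real.cos (2 * δ) :=
    Real.cos_pos_of_mem_Ioo ⟨by linarith, by linarith⟩
  have hA : 0 < A := mul_pos hβ0 hsin2
  have hB : 0 < B := by
    have : 0 < β * Real.cos (2 * δ) := mul_pos hβ0 hcos2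
    rw [hB_def]; linarith
  have hS : S = A ^ 2 + B ^ 2 := by
    rw [hS_def, hA_def, hB_def]
    linear_combination (-(β ^ 2)) * Real.sin_sq_add_cos_sq (2 * δ)
  have hSpos : 0 < S := by rw [hS]; positivity
  have hR : 0 < R := Real.sqrt_pos.mpr hSpos
  have hR2 : R ^ 2 = A ^ 2 + B ^ 2 := by rw [hR_def, Real.sq_sqrt hSpos.le, hS]
  have hc : 0 < c := div_pos (by linarith) hσ
  have hcR : c < R := (div_lt_iff₀ hσ).mpr (by rw [mul_comm]; exact hexist)
  set γ := Real.arctan (B / A) with hγ_def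
  set ψ := Real.arccos (c / R) with hψ_def
  have hγ1 : 0 < γ := by
    rw [hγ_def, ← Real.arctan_zero]
    exact Real.arctan_strictMono (div_pos hB hA)
  have hγ2 : γ < Real.pi / 2 := Real.arctan_lt_pi_div_two _
  have hcR1 : c / R < 1 := (div_lt_one hR).mpr hcR
  have hcR0 : 0 < c / R := div_pos hc hR
  have hψ1 : 0 < ψ := Real.arccos_pos.mpr hcR1
  have hψ2 : ψ < Real.pi / 2 := Real.arccos_lt_pi_div_two.mpr hcR0
  have hcosψ : Real.cos ψ = c / R := Real.cos_arccos (by linarith) hcR1.le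
  have hsinψ : 0 < Real.sin ψ := Real.sin_pos_of_pos_of_lt_pi hψ1 (by linarith)
  -- cos and sin of γ
  have hsqrt : Real.sqrt (1 + (B / A) ^ 2) = R / A := by
    rw [show 1 + (B / A) ^ 2 = S / A ^ 2 by rw [hS]; field_simp]
    rw [Real.sqrt_div hSpos.le, Real.sqrt_sq hA.le]
  have hcosγ : Real.cos γ = A / R := by
    rw [hγ_def, Real.cos_arctan, hsqrt]
    field_simp
  have hsinγ : Real.sin γ = B / R := by
    rw [hγ_def, Real.sin_arctan, hsqrt]
    field_simp
  -- key identities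
  have keyEq : ∀ x : ℝ, A * Real.cos x + B * Real.sin x = R * Real.cos (x - γ) := by
    intro x
    rw [Real.cos_sub, hcosγ, hsinγ]
    field_simp
  have keyIneq : ∀ x : ℝ, B * Real.cos x + -A * Real.sin x = R * Real.sin (γ - x) := by
    intro x
    rw [Real.sin_sub, hcosγ, hsinγ]
    field_simp
    ring
  -- the two raw solutions
  set t₁ : ℝ := δ + γ - Real.pi + ψ with ht₁_def
  set t₂ : ℝ := δ + γ + Real.pi - ψ with ht₂_def
  have ht₁lb : -Real.pi < t₁ := by rw [ht₁_def]; linarith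
  have ht₁ub : t₁ < Real.pi / 4 := by rw [ht₁_def]; linarith
  have ht₂lb : Real.pi / 2 < t₂ := by rw [ht₂_def]; linarith
  have ht₂ub : t₂ < 2 * Real.pi := by rw [ht₂_def]; linarith
  -- characterization of the equation
  have solChar : ∀ φ : ℝ,
      (A * Real.cos (φ - δ) + B * Real.sin (φ - δ) = -c ↔
        ∃ k : ℤ, φ = t₂ + 2 * Real.pi * k ∨ φ = t₁ + 2 * Real.pi * k) := by
    intro φ
    rw [keyEq]
    have hrw : R * Real.cos (φ - δ - γ) = -c ↔
        Real.cos (φ - δ - γ) = Real.cos (Real.pi - ψ) := by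
      rw [Real.cos_pi_sub, hcosψ]
      constructor
      · intro h
        field_simp
        linarith
      · intro h
        rw [h]
        field_simp
    rw [hrw, Real.cos_eq_cos_iff]
    constructor
    · rintro ⟨k, h | h⟩
      · exact ⟨-k, Or.inl (by rw [ht₂_def]; push_cast at h ⊢; linarith)⟩
      · exact ⟨k, Or.inr (by rw [ht₁_def]; push_cast at h ⊢; linarith)⟩
    · rintro ⟨k, h | h⟩
      · exact ⟨-k, Or.inl (by rw [ht₂_def] at h; push_cast at h ⊢; linarith)⟩
      · exact ⟨k, Or.inr (by rw [ht₁_def] at h; push_cast at h ⊢; linarith)⟩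
  -- sign of the inequality along each branch
  have signT₁ : ∀ k : ℤ, 0 < B * Real.cos (t₁ + 2 * Real.pi * k - δ)
      + -A * Real.sin (t₁ + 2 * Real.pi * k - δ) := by
    intro k
    rw [keyIneq]
    have : γ - (t₁ + 2 * Real.pi * k - δ) = Real.pi - ψ + 2 * Real.pi * (-k : ℤ) := by
      rw [ht₁_def]; push_cast; ring
    rw [this, sin_per, Real.sin_pi_sub]
    exact mul_pos hR hsinψ
  have signT₂ : ∀ k : ℤ, B * Real.cos (t₂ + 2 * Real.pi * k - δ)
      + -A * Real.sin (t₂ + 2 * Real.pi * k - δ) < 0 := by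
    intro k
    rw [keyIneq]
    have : γ - (t₂ + 2 * Real.pi * k - δ) = ψ - Real.pi + 2 * Real.pi * (-k : ℤ) := by
      rw [ht₂_def]; push_cast; ring
    rw [this, sin_per, show ψ - Real.pi = -(Real.pi - ψ) by ring, Real.sin_neg,
      Real.sin_pi_sub]
    have := mul_pos hR hsinψ
    linarith
  -- the representative of t₁ in [0, 2π)
  set a : ℝ := if 0 ≤ t₁ then t₁ else t₁ + 2 * Real.pi with ha_def
  have haIco : a ∈ Set.Ico 0 (2 * Real.pi) := by
    rw [ha_def]
    split_ifs with h
    · exact ⟨h, by linarith⟩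
    · constructor <;> [linarith; linarith]
  have haT₁ : ∃ k : ℤ, a = t₁ + 2 * Real.pi * k := by
    rw [ha_def]
    split_ifs with h
    · exact ⟨0, by push_cast; ring⟩
    · exact ⟨1, by push_cast; ring⟩
  have hbIco : t₂ ∈ Set.Ico 0 (2 * Real.pi) := ⟨by linarith, ht₂ub⟩
  -- pinning: a solution in [0,2π) on branch t₂ equals t₂, on branch t₁ equals a
  have pin₂ : ∀ (k : ℤ) (φ : ℝ), φ ∈ Set.Ico 0 (2 * Real.pi) →
      φ = t₂ + 2 * Real.pi * k → φ = t₂ := by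
    intro k φ ⟨h0, h2⟩ heq
    have hk1 : (k : ℝ) < 1 := by
      have h : 2 * Real.pi * (k : ℝ) < 2 * Real.pi * 1 := by linarith
      exact lt_of_mul_lt_mul_left h (by positivity)
    have hk2 : (-1 : ℝ) < (k : ℝ) := by
      have h : 2 * Real.pi * (-1 : ℝ) < 2 * Real.pi * (k : ℝ) := by linarith
      exact lt_of_mul_lt_mul_left h (by positivity)
    have : k = 0 := by
      have h1 : k < 1 := by exact_mod_cast hk1
      have h2' : -1 < k := by exact_mod_cast hk2
      omega
    rw [heq, this]; push_cast; ring
  have pin₁ : ∀ (k : ℤ) (φ : ℝ), φ ∈ Set.Ico 0 (2 * Real.pi) →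
      φ = t₁ + 2 * Real.pi * k → φ = a := by
    intro k φ ⟨h0, h2⟩ heq
    rw [ha_def]
    split_ifs with h
    · have hk1 : (k : ℝ) < 1 := by
        have hh : 2 * Real.pi * (k : ℝ) < 2 * Real.pi * 1 := by linarith
        exact lt_of_mul_lt_mul_left hh (by positivity)
      have hk2 : (-1 : ℝ) < (k : ℝ) := by
        have hh : 2 * Real.pi * (-1 : ℝ) < 2 * Real.pi * (k : ℝ) := by linarith
        exact lt_of_mul_lt_mul_left hh (by positivity)
      have : k = 0 := by
        have h1 : k < 1 := by exact_mod_cast hk1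
        have h2' : -1 < k := by exact_mod_cast hk2
        omega
      rw [heq, this]; push_cast; ring
    · push_neg at h
      have hk1 : (k : ℝ) < 2 := by
        have hh : 2 * Real.pi * (k : ℝ) < 2 * Real.pi * 2 := by linarith
        exact lt_of_mul_lt_mul_left hh (by positivity)
      have hk2 : (0 : ℝ) < (k : ℝ) := by
        have hh : 2 * Real.pi * (0 : ℝ) < 2 * Real.pi * (k : ℝ) := by linarith
        exact lt_of_mul_lt_mul_left hh (by positivity)
      have : k = 1 := by
        have h1 : k < 2 := by exact_mod_cast hk1
        have h2' : 0 < k := by exact_mod_cast hk2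
        omega
      rw [heq, this]; push_cast; ring
  -- a and t₂ are solutions
  have haSol : A * Real.cos (a - δ) + B * Real.sin (a - δ) = -c := by
    obtain ⟨k, hk⟩ := haT₁
    exact (solChar a).mpr ⟨k, Or.inr hk⟩
  have hbSol : A * Real.cos (t₂ - δ) + B * Real.sin (t₂ - δ) = -c := by
    refine (solChar t₂).mpr ⟨0, Or.inl ?_⟩
    push_cast; ring
  have haSign : 0 < B * Real.cos (a - δ) + -A * Real.sin (a - δ) := by
    obtain ⟨k, hk⟩ := haT₁
    rw [hk]; exact signT₁ k
  have hbSign : B * Real.cos (t₂ - δ) + -A * Real.sin (t₂ - δ) < 0 := by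
    have h0 := signT₂ 0
    have e0 : t₂ + 2 * Real.pi * ((0 : ℤ) : ℝ) = t₂ := by push_cast; ring
    rwa [e0] at h0
  have hab : a ≠ t₂ := by
    intro h
    rw [h] at haSign
    linarith
  refine ⟨⟨a, t₂, hab, ?_⟩, ?_, ?_⟩
  · -- set equality
    ext φ
    simp only [Set.mem_setOf_eq, Set.mem_insert_iff, Set.mem_singleton_iff]
    constructor
    · rintro ⟨hmem, heq⟩
      obtain ⟨k, hk | hk⟩ := (solChar φ).mp heq
      · exact Or.inr (pin₂ k φ hmem hk)
      · exact Or.inl (pin₁ k φ hmem hk)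
    · rintro (rfl | rfl)
      · exact ⟨haIco, haSol⟩
      · exact ⟨hbIco, hbSol⟩
  · -- unique solution with the sign condition
    refine ⟨a, ⟨haIco, haSol, haSign⟩, ?_⟩
    rintro φ ⟨hmem, heq, hsign⟩
    obtain ⟨k, hk | hk⟩ := (solChar φ).mp heq
    · exfalso
      rw [hk] at hsign
      have := signT₂ k
      linarith
    · exact pin₁ k φ hmem hk
  · -- closed form
    rintro φ ⟨hmem, heq, hsign⟩
    obtain ⟨k, hk | hk⟩ := (solChar φ).mp heq
    · exfalso
      rw [hk] at hsign
      have := signT₂ k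
      linarith
    · refine ⟨k, ?_⟩
      rw [hk, ht₁_def]
      have harc : Real.arccos ((β - 1) / (σ * R)) = ψ := by
        rw [hψ_def, hc_def, div_div]
      rw [harc]
      ring
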